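/- Let r ≥ 2 be an integer and define ε_r : ℝ → ℝ by ε_r(α) = sin²α · cos^{2(r−1)}α. If α ∈ (0, π), cos α ≠ 0 and sin²α = 1/r, then the second derivative of ε_r at α is strictly negative. -/

import Mathlib

open Real

theorem stmt_3 (r : ℕ) (hr : 2 ≤ r)
    (ε : ℝ → ℝ) (hε : ∀ α, ε α = sin α ^ 2 * cos α ^ (2 * (r - 1)))
    (α : ℝ) (hα : α ∈ Set.Ioo 0 π) (hcos : cos α ≠ 0)
    (hcrit : sin α ^ 2 = 1 / r) :
    deriv (deriv ε) α < 0 := by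
  obtain ⟨j, rfl⟩ : ∃ j, r = j + 2 := ⟨r - 2, by omega⟩
  have hεeq : ε = fun x => sin x ^ 2 * cos x ^ (2 * j + 2) := by
    funext x
    rw [hε, show 2 * (j + 2 - 1) = 2 * j + 2 from by omega]
  -- first derivative
  set F : ℝ → ℝ := fun x =>
      2 * (sin x * cos x ^ (2 * j + 3)) -
        (2 * j + 2 : ℝ) * (sin x ^ 3 * cos x ^ (2 * j + 1)) with hFdef
  have hderiv1 : deriv ε = F := by
    funext x
    rw [hεeq]
    have h1 : HasDerivAt (fun y => sin y ^ 2) (2 * sin x ^ 1 * cos x) x :=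
      (Real.hasDerivAt_sin x).pow 2
    have h2 : HasDerivAt (fun y => cos y ^ (2 * j + 2))
        (((2 * j + 2 : ℕ) : ℝ) * cos x ^ (2 * j + 1) * (-sin x)) x := by
      have := (Real.hasDerivAt_cos x).pow (2 * j + 2)
      simpa [Pi.pow_def, show 2 * j + 2 - 1 = 2 * j + 1 from by omega] using this
    rw [show (fun x => sin x ^ 2 * cos x ^ (2 * j + 2)) =
        (fun y => sin y ^ 2) * (fun y => cos y ^ (2 * j + 2)) from rfl, (h1.mul h2).deriv]
    push_cast
    ring
  rw [hderiv1]
  -- second derivative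
  have hA : HasDerivAt (fun y => sin y * cos y ^ (2 * j + 3))
      (cos α * cos α ^ (2 * j + 3) +
        sin α * (((2 * j + 3 : ℕ) : ℝ) * cos α ^ (2 * j + 2) * (-sin α))) α := by
    refine (Real.hasDerivAt_sin α).mul ?_
    have := (Real.hasDerivAt_cos α).pow (2 * j + 3)
    simpa [Pi.pow_def, show 2 * j + 3 - 1 = 2 * j + 2 from by omega] using this
  have hB : HasDerivAt (fun y => sin y ^ 3 * cos y ^ (2 * j + 1))
      ((3 * sin α ^ 2 * cos α) * cos α ^ (2 * j + 1) +
        sin α ^ 3 * (((2 * j + 1 : ℕ) : ℝ) * cos α ^ (2 * j) * (-sin α))) α := by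
    have h3 : HasDerivAt (fun y => sin y ^ 3) (3 * sin α ^ 2 * cos α) α := by
      simpa [Pi.pow_def] using (Real.hasDerivAt_sin α).pow 3
    refine h3.mul ?_
    have := (Real.hasDerivAt_cos α).pow (2 * j + 1)
    simpa [Pi.pow_def, show 2 * j + 1 - 1 = 2 * j from by omega] using this
  have hF' : HasDerivAt F
      (2 * (cos α * cos α ^ (2 * j + 3) +
          sin α * (((2 * j + 3 : ℕ) : ℝ) * cos α ^ (2 * j + 2) * (-sin α))) -
        (2 * j + 2 : ℝ) * ((3 * sin α ^ 2 * cos α) * cos α ^ (2 * j + 1) +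
          sin α ^ 3 * (((2 * j + 1 : ℕ) : ℝ) * cos α ^ (2 * j) * (-sin α)))) α :=
    (hA.const_mul 2).sub (hB.const_mul _)
  rw [hF'.deriv]
  -- evaluate at the critical point
  set J : ℝ := (j : ℝ) with hJ
  have hJ2 : (0 : ℝ) < J + 2 := by positivity
  have hs2 : sin α ^ 2 = 1 / (J + 2) := by
    rw [hcrit]; push_cast; ring_nf; rfl
  have hc2 : cos α ^ 2 = (J + 1) / (J + 2) := by
    have h := sin_sq_add_cos_sq α
    have : cos α ^ 2 = 1 - sin α ^ 2 := by linarith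
    rw [this, hs2]; field_simp; ring
  have hcc : cos α ^ (2 * j) = ((J + 1) / (J + 2)) ^ j := by
    rw [pow_mul, hc2]
  have hc4 : cos α ^ 4 = ((J + 1) / (J + 2)) ^ 2 := by
    rw [show (4 : ℕ) = 2 * 2 from rfl, pow_mul, hc2]
  have hs4 : sin α ^ 4 = (1 / (J + 2)) ^ 2 := by
    rw [show (4 : ℕ) = 2 * 2 from rfl, pow_mul, hs2]
  have key : (2 * (cos α * cos α ^ (2 * j + 3) +
          sin α * (((2 * j + 3 : ℕ) : ℝ) * cos α ^ (2 * j + 2) * (-sin α))) -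
        (2 * j + 2 : ℝ) * ((3 * sin α ^ 2 * cos α) * cos α ^ (2 * j + 1) +
          sin α ^ 3 * (((2 * j + 1 : ℕ) : ℝ) * cos α ^ (2 * j) * (-sin α))))
      = ((J + 1) / (J + 2)) ^ j * (-(4 * (J + 1) / (J + 2))) := by
    have step : (2 * (cos α * cos α ^ (2 * j + 3) +
          sin α * (((2 * j + 3 : ℕ) : ℝ) * cos α ^ (2 * j + 2) * (-sin α))) -
        (2 * j + 2 : ℝ) * ((3 * sin α ^ 2 * cos α) * cos α ^ (2 * j + 1) +
          sin α ^ 3 * (((2 * j + 1 : ℕ) : ℝ) * cos α ^ (2 * j) * (-sin α))))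
        = cos α ^ (2 * j) *
            (2 * (cos α ^ 4 - (2 * J + 3) * (sin α ^ 2 * cos α ^ 2)) -
              (2 * J + 2) * (3 * (sin α ^ 2 * cos α ^ 2) - (2 * J + 1) * sin α ^ 4)) := by
      push_cast
      ring
    rw [step, hcc, hc4, hs4, hs2, hc2]
    field_simp
    ring
  rw [key]
  apply mul_neg_of_pos_of_neg
  · positivity
  · have : (0 : ℝ) < 4 * (J + 1) / (J + 2) := by positivity
    linarith
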